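/- If a joint strategy δ has CCE gap equal to γ and is ε-normal-form-marginalizable (total correlation at most ε), then the product of its marginals μ(δ) is a (γ + 2M√(2ε))-approximate Nash equilibrium: NashGap(μ(δ)) ≤ γ + 2M√(2ε), where M = max_{i∈N} max_{ρ∈P} |u_i(ρ)|. -/

import Mathlib

open Finset

noncomputable def marg {N : Type} [Fintype N] [DecidableEq N]
    {P : N → Type} [∀ i, Fintype (P i)] [∀ i, DecidableEq (P i)]
    (δ : (∀ j, P j) → ℝ) (i : N) (a : P i) : ℝ :=
  ∑ ρ : ∀ j, P j, if ρ i = a then δ ρ else 0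

noncomputable def prodMarg {N : Type} [Fintype N] [DecidableEq N]
    {P : N → Type} [∀ i, Fintype (P i)] [∀ i, DecidableEq (P i)]
    (δ : (∀ j, P j) → ℝ) (ρ : ∀ j, P j) : ℝ :=
  ∏ i, marg δ i (ρ i)

noncomputable def KL {X : Type} [Fintype X] (p q : X → ℝ) : ℝ :=
  ∑ x, p x * Real.log (p x / q x)

noncomputable def expUtil {X : Type} [Fintype X] (u : X → ℝ) (δ : X → ℝ) : ℝ :=
  ∑ x, u x * δ x

/-- Expected utility for player `i` when they deviate to the pure strategy `a` while the
other players continue to play according to (the marginal of) `δ`. -/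
noncomputable def devUtil {N : Type} [Fintype N] [DecidableEq N]
    {P : N → Type} [∀ i, Fintype (P i)] [∀ i, DecidableEq (P i)]
    (u : N → (∀ j, P j) → ℝ) (δ : (∀ j, P j) → ℝ) (i : N) (a : P i) : ℝ :=
  ∑ ρ, δ ρ * u i (Function.update ρ i a)

/-- The (CCE/Nash) gap of a joint strategy `δ`: the largest gain available to any player
from deviating to any fixed pure strategy. -/
noncomputable def gap {N : Type} [Fintype N] [DecidableEq N] [Nonempty N]
    {P : N → Type} [∀ i, Fintype (P i)] [∀ i, DecidableEq (P i)] [∀ i, Nonempty (P i)]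
    (u : N → (∀ j, P j) → ℝ) (δ : (∀ j, P j) → ℝ) : ℝ :=
  haveI : Nonempty (Σ i, P i) := ⟨⟨Classical.arbitrary N, Classical.arbitrary _⟩⟩
  Finset.univ.sup' Finset.univ_nonempty
    (fun q : Σ i, P i => devUtil u δ q.1 q.2 - expUtil (u q.1) δ)



/-- auxiliary derivative function -/
noncomputable def hfun (t : ℝ) : ℝ := Real.log t - (3/2)*(t-1)*(t+5)/(t+2)^2

lemma hasDerivAt_hfun {t : ℝ} (ht : 0 < t) :
    HasDerivAt hfun ((t-1)^2*(t+8)/(t*(t+2)^3)) t := by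
  have h2 : t + 2 ≠ 0 := by positivity
  have hnum : HasDerivAt (fun x : ℝ => (3/2)*(x-1)*(x+5)) (3*(t+2)) t := by
    have h := (((hasDerivAt_id t).sub_const 1).const_mul (3/2:ℝ)).mul
      ((hasDerivAt_id t).add_const 5)
    refine h.congr_deriv ?_
    simp only [id_eq]
    ring
  have hden : HasDerivAt (fun x : ℝ => (x+2)^2) (2*(t+2)) t := by
    have h := ((hasDerivAt_id t).add_const 2).pow 2
    refine h.congr_deriv ?_
    simp only [id_eq]
    ring
  have hq := hnum.div hden (pow_ne_zero 2 h2)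
  have h := (Real.hasDerivAt_log (ne_of_gt ht)).sub hq
  refine h.congr_deriv ?_
  field_simp
  ring

lemma hfun_one : hfun 1 = 0 := by simp [hfun]

lemma hfun_mono : MonotoneOn hfun (Set.Ioi (0:ℝ)) := by
  apply monotoneOn_of_deriv_nonneg (convex_Ioi 0)
  · intro x hx
    exact (hasDerivAt_hfun hx).differentiableAt.continuousAt.continuousWithinAt
  · rw [interior_Ioi]
    intro x hx
    exact (hasDerivAt_hfun hx).differentiableAt.differentiableWithinAt
  · rw [interior_Ioi]
    intro x hx
    rw [(hasDerivAt_hfun hx).deriv]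
    have hx' : (0:ℝ) < x := hx
    positivity

/-- the function whose nonnegativity is the key pointwise inequality -/
noncomputable def gfun (t : ℝ) : ℝ := t * Real.log t - t + 1 - (3/2)*(t-1)^2/(t+2)

lemma hasDerivAt_gfun {t : ℝ} (ht : 0 < t) : HasDerivAt gfun (hfun t) t := by
  have h2 : t + 2 ≠ 0 := by positivity
  have hnum : HasDerivAt (fun x : ℝ => (3/2)*(x-1)^2) (3*(t-1)) t := by
    have h := (((hasDerivAt_id t).sub_const 1).pow 2).const_mul (3/2:ℝ)
    refine h.congr_deriv ?_
    simp only [id_eq]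
    ring
  have hden : HasDerivAt (fun x : ℝ => x+2) 1 t := (hasDerivAt_id t).add_const 2
  have hq := hnum.div hden h2
  have h := ((Real.hasDerivAt_mul_log (ne_of_gt ht)).sub (hasDerivAt_id t)).add_const 1
  have h' := h.sub hq
  refine h'.congr_deriv ?_
  unfold hfun
  field_simp
  ring

lemma gfun_one : gfun 1 = 0 := by norm_num [gfun]

lemma gfun_nonneg {t : ℝ} (ht : 0 ≤ t) : 0 ≤ gfun t := by
  rcases eq_or_lt_of_le ht with h0 | h0
  · simp [gfun, ← h0]
    norm_num
  rcases le_total t 1 with h1 | h1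
  · -- antitone on [t,1]
    have hanti : AntitoneOn gfun (Set.Icc t 1) := by
      apply antitoneOn_of_deriv_nonpos (convex_Icc t 1)
      · intro x hx
        have hx0 : 0 < x := lt_of_lt_of_le h0 hx.1
        exact (hasDerivAt_gfun hx0).differentiableAt.continuousAt.continuousWithinAt
      · rw [interior_Icc]
        intro x hx
        have hx0 : 0 < x := lt_of_lt_of_le h0 hx.1.le
        exact (hasDerivAt_gfun hx0).differentiableAt.differentiableWithinAt
      · rw [interior_Icc]
        intro x hx
        have hx0 : 0 < x := lt_of_lt_of_le h0 hx.1.le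
        rw [(hasDerivAt_gfun hx0).deriv]
        have : hfun x ≤ hfun 1 := hfun_mono hx0 (by norm_num) hx.2.le
        rw [hfun_one] at this
        exact this
    have := hanti (Set.mem_Icc.2 ⟨le_refl t, h1⟩) (Set.mem_Icc.2 ⟨h1, le_refl 1⟩) h1
    rwa [gfun_one] at this
  · -- monotone on [1,t]
    have hmono : MonotoneOn gfun (Set.Icc 1 t) := by
      apply monotoneOn_of_deriv_nonneg (convex_Icc 1 t)
      · intro x hx
        have hx0 : 0 < x := lt_of_lt_of_le one_pos hx.1
        exact (hasDerivAt_gfun hx0).differentiableAt.continuousAt.continuousWithinAt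
      · rw [interior_Icc]
        intro x hx
        have hx0 : 0 < x := lt_of_lt_of_le one_pos hx.1.le
        exact (hasDerivAt_gfun hx0).differentiableAt.differentiableWithinAt
      · rw [interior_Icc]
        intro x hx
        have hx0 : 0 < x := lt_of_lt_of_le one_pos hx.1.le
        rw [(hasDerivAt_gfun hx0).deriv]
        have : hfun 1 ≤ hfun x := hfun_mono (by norm_num) hx0 hx.1.le
        rwa [hfun_one] at this
    have := hmono (Set.mem_Icc.2 ⟨le_refl 1, h1⟩) (Set.mem_Icc.2 ⟨h1, le_refl t⟩) h1
    rwa [gfun_one] at this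

lemma phi_ineq {t : ℝ} (ht : 0 ≤ t) :
    (3/2)*(t-1)^2/(t+2) ≤ t * Real.log t - t + 1 := by
  have := gfun_nonneg ht
  unfold gfun at this
  linarith

theorem pinsker {X : Type} [Fintype X] (p q : X → ℝ)
    (hp : ∀ x, 0 ≤ p x) (hq : ∀ x, 0 ≤ q x)
    (hps : ∑ x, p x = 1) (hqs : ∑ x, q x = 1)
    (habs : ∀ x, q x = 0 → p x = 0) :
    ∑ x, |p x - q x| ≤ Real.sqrt (2 * KL p q) := by
  set a : X → ℝ := fun x => p x + 2 * q x with ha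
  set b : X → ℝ := fun x => q x * ((p x / q x - 1)^2 / (p x / q x + 2)) with hb
  have ha0 : ∀ x, 0 ≤ a x := fun x => by have := hp x; have := hq x; simp [ha]; linarith
  have hb0 : ∀ x, 0 ≤ b x := by
    intro x
    have := hp x; have := hq x
    have hr : 0 ≤ p x / q x := div_nonneg (hp x) (hq x)
    apply mul_nonneg (hq x)
    positivity
  -- pointwise: |p - q| = sqrt a * sqrt b
  have hpoint : ∀ x, |p x - q x| = Real.sqrt (a x) * Real.sqrt (b x) := by
    intro x
    rw [← Real.sqrt_mul (ha0 x)]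
    rw [show |p x - q x| = Real.sqrt ((p x - q x)^2) by rw [Real.sqrt_sq_eq_abs]]
    congr 1
    rcases eq_or_lt_of_le (hq x) with h0 | h0
    · have hp0 := habs x h0.symm
      simp only [ha, hb]
      rw [hp0, ← h0]
      norm_num
    · have hq0 : q x ≠ 0 := ne_of_gt h0
      have hpq : p x + 2 * q x ≠ 0 := by have := hp x; positivity
      have hkey : q x * ((p x / q x - 1)^2 / (p x / q x + 2))
          = (p x - q x)^2 / (p x + 2 * q x) := by
        field_simp
      simp only [ha, hb]
      rw [hkey, mul_div_cancel₀ _ hpq]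
  -- sum of a is 3
  have hsa : ∑ x, a x = 3 := by
    simp only [ha]
    rw [Finset.sum_add_distrib, ← Finset.mul_sum, hps, hqs]
    norm_num
  -- pointwise bound on b
  have hbd : ∀ x, b x ≤ (2/3) * (p x * Real.log (p x / q x) - p x + q x) := by
    intro x
    rcases eq_or_lt_of_le (hq x) with h0 | h0
    · have hp0 := habs x h0.symm
      simp [hb, ← h0, hp0]
    · have hq0 : q x ≠ 0 := ne_of_gt h0
      have hr : 0 ≤ p x / q x := div_nonneg (hp x) (hq x)
      have key := phi_ineq hr
      have hqr : q x * (p x / q x) = p x := by field_simp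
      calc b x = q x * ((p x / q x - 1)^2 / (p x / q x + 2)) := rfl
        _ ≤ q x * ((2/3) * ((p x / q x) * Real.log (p x / q x) - (p x / q x) + 1)) := by
            apply mul_le_mul_of_nonneg_left _ (hq x)
            rw [mul_div_assoc] at key
            linarith
        _ = (2/3) * (q x * (p x / q x) * Real.log (p x / q x) - q x * (p x / q x) + q x) := by
            ring
        _ = (2/3) * (p x * Real.log (p x / q x) - p x + q x) := by
            rw [hqr]
  have hsb : ∑ x, b x ≤ (2/3) * KL p q := by
    calc ∑ x, b x ≤ ∑ x, (2/3) * (p x * Real.log (p x / q x) - p x + q x) :=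
          Finset.sum_le_sum fun x _ => hbd x
      _ = (2/3) * KL p q := by
          rw [← Finset.mul_sum]
          congr 1
          unfold KL
          rw [Finset.sum_add_distrib, Finset.sum_sub_distrib, hps, hqs]
          ring
  have hKL0 : 0 ≤ (2/3) * KL p q := le_trans (Finset.sum_nonneg fun x _ => hb0 x) hsb
  calc ∑ x, |p x - q x| = ∑ x, Real.sqrt (a x) * Real.sqrt (b x) := by
        exact Finset.sum_congr rfl fun x _ => hpoint x
    _ ≤ Real.sqrt (∑ x, a x) * Real.sqrt (∑ x, b x) :=
        Real.sum_sqrt_mul_sqrt_le _ ha0 hb0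
    _ ≤ Real.sqrt 3 * Real.sqrt ((2/3) * KL p q) := by
        rw [hsa]
        exact mul_le_mul_of_nonneg_left (Real.sqrt_le_sqrt hsb) (Real.sqrt_nonneg 3)
    _ = Real.sqrt (2 * KL p q) := by
        rw [← Real.sqrt_mul (by norm_num)]
        congr 1
        ring

/-- If a joint strategy `δ` has CCE gap `γ` and is `ε`-normal-form-marginalizable
(total correlation at most `ε`), then the product of its marginals is a
`(γ + 2M√(2ε))`-approximate Nash equilibrium. -/
theorem nashGap_le_of_marginalizable
    {N : Type} [Fintype N] [DecidableEq N] [Nonempty N]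
    {P : N → Type} [∀ i, Fintype (P i)] [∀ i, DecidableEq (P i)] [∀ i, Nonempty (P i)]
    (u : N → (∀ j, P j) → ℝ) (M : ℝ)
    (hM : M = (Finset.univ : Finset (N × (∀ j, P j))).sup' Finset.univ_nonempty
      (fun q => |u q.1 q.2|))
    (δ : (∀ j, P j) → ℝ) (hpos : ∀ ρ, 0 ≤ δ ρ) (hsum : ∑ ρ, δ ρ = 1)
    (γ ε : ℝ) (hγ : gap u δ = γ) (hε : KL δ (prodMarg δ) ≤ ε) :
    gap u (prodMarg δ) ≤ γ + 2 * M * Real.sqrt (2 * ε) := by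
  set μ : (∀ j, P j) → ℝ := prodMarg δ with hμdef
  -- basic facts about marginals
  have hmarg0 : ∀ i (a : P i), 0 ≤ marg δ i a := by
    intro i a
    apply Finset.sum_nonneg
    intro ρ _
    split <;> simp [hpos ρ]
  have hmargsum : ∀ i, ∑ a : P i, marg δ i a = 1 := by
    intro i
    unfold marg
    rw [Finset.sum_comm]
    rw [← hsum]
    apply Finset.sum_congr rfl
    intro ρ _
    rw [Finset.sum_ite_eq univ (ρ i) (fun _ => δ ρ)]
    simp
  have hμ0 : ∀ ρ, 0 ≤ μ ρ := by
    intro ρ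
    exact Finset.prod_nonneg fun i _ => hmarg0 i (ρ i)
  have hμsum : ∑ ρ, μ ρ = 1 := by
    have h := Fintype.prod_sum (fun (i : N) (a : P i) => marg δ i a)
    simp only [hμdef, prodMarg]
    rw [← h]
    rw [Finset.prod_congr rfl fun i _ => hmargsum i]
    simp
  have habs : ∀ ρ, μ ρ = 0 → δ ρ = 0 := by
    intro ρ h0
    by_contra hne
    have hδpos : 0 < δ ρ := lt_of_le_of_ne (hpos ρ) (Ne.symm hne)
    have : 0 < μ ρ := by
      apply Finset.prod_pos
      intro i _
      have : δ ρ ≤ marg δ i (ρ i) := by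
        unfold marg
        have := Finset.single_le_sum (f := fun ρ' => if ρ' i = ρ i then δ ρ' else 0)
          (fun ρ' _ => by by_cases hc : ρ' i = ρ i <;> simp [hc, hpos ρ']) (Finset.mem_univ ρ)
        simpa using this
      linarith
    linarith
  -- total variation bound
  set T : ℝ := ∑ ρ, |δ ρ - μ ρ| with hT
  have hTbound : T ≤ Real.sqrt (2 * ε) := by
    have h1 : T ≤ Real.sqrt (2 * KL δ μ) := pinsker δ μ hpos hμ0 hsum hμsum habs
    have h2 : Real.sqrt (2 * KL δ μ) ≤ Real.sqrt (2 * ε) := by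
      apply Real.sqrt_le_sqrt
      linarith
    linarith
  have hT0 : 0 ≤ T := Finset.sum_nonneg fun ρ _ => abs_nonneg _
  -- bound on utilities
  have hMb : ∀ i ρ, |u i ρ| ≤ M := by
    intro i ρ
    rw [hM]
    exact Finset.le_sup' (fun q : N × (∀ j, P j) => |u q.1 q.2|) (Finset.mem_univ (i, ρ))
  have hM0 : 0 ≤ M := le_trans (abs_nonneg _) (hMb (Classical.arbitrary N) (Classical.arbitrary _))
  -- expectation perturbation bound
  have hperturb : ∀ (f : (∀ j, P j) → ℝ), (∀ ρ, |f ρ| ≤ M) →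
      |∑ ρ, μ ρ * f ρ - ∑ ρ, δ ρ * f ρ| ≤ M * T := by
    intro f hf
    rw [← Finset.sum_sub_distrib]
    calc |∑ ρ, (μ ρ * f ρ - δ ρ * f ρ)| ≤ ∑ ρ, |μ ρ * f ρ - δ ρ * f ρ| :=
          Finset.abs_sum_le_sum_abs _ _
      _ ≤ ∑ ρ, M * |δ ρ - μ ρ| := by
          apply Finset.sum_le_sum
          intro ρ _
          rw [show μ ρ * f ρ - δ ρ * f ρ = (μ ρ - δ ρ) * f ρ by ring, abs_mul, abs_sub_comm]
          calc |δ ρ - μ ρ| * |f ρ| ≤ |δ ρ - μ ρ| * M :=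
                mul_le_mul_of_nonneg_left (hf ρ) (abs_nonneg _)
            _ = M * |δ ρ - μ ρ| := mul_comm _ _
      _ = M * T := by rw [← Finset.mul_sum]
  -- main bound
  haveI : Nonempty (Σ i, P i) := ⟨⟨Classical.arbitrary N, Classical.arbitrary _⟩⟩
  rw [gap]
  apply Finset.sup'_le
  intro q _
  obtain ⟨i, a⟩ := q
  have hgapδ : devUtil u δ i a - expUtil (u i) δ ≤ γ := by
    rw [← hγ, gap]
    exact Finset.le_sup' (fun q : Σ i, P i => devUtil u δ q.1 q.2 - expUtil (u q.1) δ)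
      (Finset.mem_univ ⟨i, a⟩)
  have hdev : |devUtil u μ i a - devUtil u δ i a| ≤ M * T := by
    unfold devUtil
    exact hperturb (fun ρ => u i (Function.update ρ i a)) (fun ρ => hMb i _)
  have hexp : |expUtil (u i) μ - expUtil (u i) δ| ≤ M * T := by
    unfold expUtil
    have := hperturb (fun ρ => u i ρ) (fun ρ => hMb i ρ)
    calc |∑ x, u i x * μ x - ∑ x, u i x * δ x|
        = |∑ ρ, μ ρ * u i ρ - ∑ ρ, δ ρ * u i ρ| := by
          congr 1
          rw [Finset.sum_congr rfl fun x _ => mul_comm (u i x) (μ x),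
              Finset.sum_congr rfl fun x _ => mul_comm (u i x) (δ x)]
      _ ≤ M * T := this
  have hMT : M * T ≤ M * Real.sqrt (2 * ε) := mul_le_mul_of_nonneg_left hTbound hM0
  have h1 := abs_le.1 hdev
  have h2 := abs_le.1 hexp
  simp only
  linarith
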